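/- Let G be a simple graph on a finite vertex type V equipped with a linear order, and let p be a natural number such that every vertex v has at most p neighbors u with v < u. Then for every natural number k ≥ 1, G contains a k-clique if and only if there exists a vertex v such that the subgraph of G induced on S_v := {v} ∪ {u : u adjacent to v in G and v < u} contains a k-clique; moreover each set S_v has at most p + 1 vertices. -/

import Mathlib

/-- Lemma 12 (degeneracy OR kernel, combinatorial content): if every vertex has at
most `p` later neighbors in a linear order, then `G` has a `k`-clique (for `k ≥ 1`)
iff the subgraph induced on some `S_v = {v} ∪ {u | v ~ u and v < u}` has a
`k`-clique; moreover each `S_v` has at most `p + 1` vertices. -/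
theorem clique_iff_degeneracy_neighborhood {V : Type*} [Fintype V] [LinearOrder V]
    (G : SimpleGraph V) (p : ℕ)
    (hp : ∀ v : V, ({u | G.Adj v u ∧ v < u} : Set V).ncard ≤ p)
    (k : ℕ) (hk : 1 ≤ k) :
    ((∃ s : Finset V, G.IsNClique k s) ↔
      ∃ v : V, ∃ s : Finset ({v} ∪ {u | G.Adj v u ∧ v < u} : Set V),
        (G.induce ({v} ∪ {u | G.Adj v u ∧ v < u} : Set V)).IsNClique k s) ∧
      ∀ v : V, ({v} ∪ {u | G.Adj v u ∧ v < u} : Set V).ncard ≤ p + 1 := by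
  constructor
  · constructor
    · rintro ⟨s, hs⟩
      have hne : s.Nonempty := by
        rw [← Finset.card_pos, hs.card_eq]; omega
      set v := s.min' hne with hv
      refine ⟨v, ?_⟩
      have hmem : ∀ x ∈ s, x ∈ ({v} ∪ {u | G.Adj v u ∧ v < u} : Set V) := by
        intro x hx
        rcases eq_or_ne x v with h | h
        · exact Or.inl h
        · exact Or.inr ⟨hs.1 (s.min'_mem hne) hx (Ne.symm h),
            lt_of_le_of_ne (s.min'_le x hx) (Ne.symm h)⟩
      refine ⟨s.attach.map ⟨fun x => ⟨x.1, hmem x.1 x.2⟩, ?_⟩, ?_, ?_⟩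
      · intro a b hab
        simp only [Subtype.mk.injEq] at hab
        exact Subtype.ext hab
      · intro a ha b hb hab
        simp only [Finset.coe_map, Set.mem_image, Finset.mem_coe,
          Finset.mem_attach, Function.Embedding.coeFn_mk] at ha hb
        obtain ⟨⟨a', ha'⟩, -, rfl⟩ := ha
        obtain ⟨⟨b', hb'⟩, -, rfl⟩ := hb
        exact hs.1 ha' hb' (fun h => hab (Subtype.ext h))
      · rw [Finset.card_map, Finset.card_attach, hs.card_eq]
    · rintro ⟨v, t, ht⟩
      refine ⟨t.map ⟨Subtype.val, Subtype.val_injective⟩, ?_, ?_⟩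
      · intro a ha b hb hab
        simp only [Finset.coe_map, Set.mem_image, Finset.mem_coe,
          Function.Embedding.coeFn_mk] at ha hb
        obtain ⟨a', ha', rfl⟩ := ha
        obtain ⟨b', hb', rfl⟩ := hb
        exact ht.1 ha' hb' (fun h => hab (by rw [h]))
      · rw [Finset.card_map, ht.card_eq]
  · intro v
    calc ({v} ∪ {u | G.Adj v u ∧ v < u} : Set V).ncard
        ≤ ({v} : Set V).ncard + ({u | G.Adj v u ∧ v < u} : Set V).ncard :=
          Set.ncard_union_le _ _
      _ ≤ 1 + p := by
          have := hp v
          simp [Set.ncard_singleton]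
          omega
      _ = p + 1 := by omega
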